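/- arXiv:1302.3205 — 4 statements merged into one kernel-verified Lean document; each statement's English description precedes it below -/
import Mathlib

section
/- (Open Mapping) Let (X, τ_X) and (Y, τ_Y) be topological spaces, let f : X → Y be a continuous function, and assume that for each x ∈ X the set x^* is closed in the ultrafilter space βX_d. Then f is an open map if and only if for every x ∈ X, (f(x))^* ⊆ f^β(x^*), i.e., every ultrafilter q ∈ (f(x))^* equals the pushforward f^β(p) of some p ∈ x^*. (Theorem 3.6) -/
/-- `near x` is `x^*`: the set of ultrafilters `p` on `X` (points of `βX_d`)
such that `x ∈ cl_X A` for every `A ∈ p`, i.e. the ultrafilters near to `x`. -/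
def near {X : Type*} [TopologicalSpace X] (x : X) : Set (Ultrafilter X) :=
  {p | ∀ A ∈ p, x ∈ closure A}

lemma mem_near_iff {X : Type*} [TopologicalSpace X] {x : X} {p : Ultrafilter X} :
    p ∈ near x ↔ ↑p ≤ nhds x := by
  constructor
  · intro h U hU
    by_contra hUp
    have hc : Uᶜ ∈ p := (Ultrafilter.compl_mem_iff_notMem).2 hUp
    have := h Uᶜ hc
    rcases mem_closure_iff_nhds.1 this U hU with ⟨y, hyU, hyc⟩
    exact hyc hyU
  · intro h A hA
    refine mem_closure_iff_nhds.2 fun U hU => ?_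
    exact Ultrafilter.nonempty_of_mem (p.toFilter.inter_mem (h hU) hA)

/-- Open Mapping theorem. -/
theorem stmt8 {X Y : Type*} [TopologicalSpace X] [TopologicalSpace Y]
    (f : X → Y) (hf : Continuous f) (hcl : ∀ x : X, IsClosed (near x)) :
    IsOpenMap f ↔ ∀ x : X, near (f x) ⊆ Ultrafilter.map f '' near x := by
  constructor
  · intro hopen x q hq
    rw [mem_near_iff] at hq
    have hne : Filter.NeBot (nhds x ⊓ Filter.comap f ↑q) := by
      rw [Filter.inf_neBot_iff]
      intro U hU B hB
      rcases hB with ⟨s, hsq, hsub⟩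
      have hUo : f '' interior U ∈ nhds (f x) :=
        (hopen _ isOpen_interior).mem_nhds ⟨x, mem_interior_iff_mem_nhds.2 hU, rfl⟩
      have : (s ∩ f '' interior U).Nonempty :=
        Ultrafilter.nonempty_of_mem (q.toFilter.inter_mem hsq (hq hUo))
      rcases this with ⟨y, hys, u, huU, rfl⟩
      exact ⟨u, interior_subset huU, hsub hys⟩
    refine ⟨Ultrafilter.of (nhds x ⊓ Filter.comap f ↑q), ?_, ?_⟩
    · exact mem_near_iff.2 ((Ultrafilter.of_le _).trans inf_le_left)
    · apply Ultrafilter.coe_le_coe.1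
      calc (↑(Ultrafilter.map f (Ultrafilter.of (nhds x ⊓ Filter.comap f ↑q))) : Filter Y)
          = Filter.map f ↑(Ultrafilter.of (nhds x ⊓ Filter.comap f ↑q)) := rfl
        _ ≤ Filter.map f (Filter.comap f ↑q) :=
            Filter.map_mono ((Ultrafilter.of_le _).trans inf_le_right)
        _ ≤ ↑q := Filter.map_comap_le
  · intro h
    rw [isOpenMap_iff_nhds_le]
    intro x s hs
    by_contra hsn
    have hne : Filter.NeBot (nhds (f x) ⊓ Filter.principal sᶜ) := by
      rw [Filter.inf_principal_neBot_iff]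
      intro U hU
      by_contra hc
      rw [Set.not_nonempty_iff_eq_empty] at hc
      exact hsn (Filter.mem_of_superset hU (by
        intro y hy
        by_contra hys
        exact Set.eq_empty_iff_forall_notMem.1 hc y ⟨hy, hys⟩))
    set q := Ultrafilter.of (nhds (f x) ⊓ Filter.principal sᶜ) with hqdef
    have hq : q ∈ near (f x) := mem_near_iff.2 ((Ultrafilter.of_le _).trans inf_le_left)
    rcases h x hq with ⟨p, hp, hpq⟩
    have hsp : f ⁻¹' s ∈ p := mem_near_iff.1 hp hs
    have hsq : s ∈ q := by rw [← hpq]; exact hsp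
    have hscq : sᶜ ∈ q :=
      (Ultrafilter.of_le _) (Filter.mem_inf_of_right (Filter.mem_principal_self _))
    exact Ultrafilter.nonempty_of_mem (q.toFilter.inter_mem hsq hscq)
      |>.ne_empty (Set.inter_compl_self s)
end

section
/- A topological space (X, τ) is a regular T₁ space (i.e., T₃) if and only if X is T₁ and for every x ∈ X and every closed set F ⊆ X with x ∉ F, one has x^* ∩ cl_{βX_d}(F^*) = ∅, where the closure of F^* is taken in the ultrafilter space βX_d. (Theorem 4.4(4)) -/
/-- `nearSet F` is `F^*`: the set of ultrafilters `p` on `X` such that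
`cl_X A` meets `F` for every `A ∈ p`. -/
def nearSet {X : Type*} [TopologicalSpace X] (F : Set X) : Set (Ultrafilter X) :=
  {p | ∀ A ∈ p, (closure A ∩ F).Nonempty}

theorem stmt17 {X : Type*} [TopologicalSpace X] :
    T3Space X ↔ T1Space X ∧
      ∀ (x : X) (F : Set X), IsClosed F → x ∉ F →
        near x ∩ closure (nearSet F) = ∅ := by
  constructor
  · intro h
    refine ⟨inferInstance, fun x F hF hxF => ?_⟩
    ext p
    simp only [Set.mem_inter_iff, Set.mem_empty_iff_false, iff_false, not_and]
    intro hpx hpc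
    -- get closed nbhd t of x inside Fᶜ
    obtain ⟨t, ht, htc, hts⟩ := exists_mem_nhds_isClosed_subset (hF.isOpen_compl.mem_nhds hxF)
    set U := interior t with hU
    have hUx : x ∈ U := mem_interior_iff_mem_nhds.mpr ht
    -- U ∈ p
    have hUp : U ∈ p := by
      by_contra hUp
      have hcomp : Uᶜ ∈ p := Ultrafilter.compl_mem_iff_notMem.mpr hUp
      have := hpx _ hcomp
      rw [isOpen_interior.isClosed_compl.closure_eq] at this
      exact this hUx
    -- basic open set in βX_d
    have hopen : IsOpen {q : Ultrafilter X | U ∈ q} := ultrafilter_isOpen_basic U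
    obtain ⟨q, hqU, hq⟩ := mem_closure_iff.mp hpc _ hopen hUp
    obtain ⟨y, hy1, hy2⟩ := hq U hqU
    have : y ∈ t := htc.closure_subset_iff.mpr interior_subset hy1
    exact hts this hy2
  · rintro ⟨ht1, h⟩
    haveI : RegularSpace X := by
      refine ⟨fun {F} {x} hF hxF => ?_⟩
      by_contra hdis
      haveI : Filter.NeBot (nhdsSet F ⊓ nhds x) := ⟨fun hb => hdis (disjoint_iff.mpr hb)⟩
      obtain ⟨p, hp⟩ := Filter.exists_ultrafilter_le (nhdsSet F ⊓ nhds x)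
      have hpx : (p : Filter X) ≤ nhds x := hp.trans inf_le_right
      have hpF : (p : Filter X) ≤ nhdsSet F := hp.trans inf_le_left
      have h1 : p ∈ near x := by
        intro A hA
        rw [mem_closure_iff_nhds]
        intro t htx
        exact Ultrafilter.nonempty_of_mem (p.inter_mem (hpx htx) hA)
      have h2 : p ∈ nearSet F := by
        intro A hA
        by_contra hne
        rw [Set.not_nonempty_iff_eq_empty] at hne
        have hcl : (closure A)ᶜ ∈ nhdsSet F := by
          refine (isClosed_closure.isOpen_compl.mem_nhdsSet).mpr ?_
          intro y hy hyA
          exact Set.eq_empty_iff_forall_notMem.mp hne y ⟨hyA, hy⟩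
        have : (closure A)ᶜ ∈ p := hpF hcl
        exact (Ultrafilter.compl_mem_iff_notMem.mp this) (p.mem_of_superset hA subset_closure)
      have := h x F hF hxF
      have hmem : p ∈ near x ∩ closure (nearSet F) := ⟨h1, subset_closure h2⟩
      rw [this] at hmem
      exact hmem
    constructor
end

section
/- If a topological space (X, τ) is completely regular, then for every x ∈ X and every closed set F ⊆ X with x ∉ F, one has cl_{βX_d}(x^*) ∩ cl_{βX_d}(F^*) = ∅, where the closures are taken in the ultrafilter space βX_d. (Theorem 4.4(5)) -/
theorem stmt18 {X : Type*} [TopologicalSpace X] [CompletelyRegularSpace X]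
    (x : X) (F : Set X) (hF : IsClosed F) (hx : x ∉ F) :
    closure (near x) ∩ closure (nearSet F) = ∅ := by
  obtain ⟨f, hf, hfx, hfF⟩ := CompletelyRegularSpace.completely_regular x F hF hx
  set g : X → ℝ := fun y => (f y : ℝ) with hg
  have hgc : Continuous g := continuous_subtype_val.comp hf
  set A : Set X := {y | g y < 1/2} with hA
  set B : Set X := {y | 1/2 < g y} with hB
  have hAc : IsClosed Aᶜ := by
    have : Aᶜ = {y | 1/2 ≤ g y} := by
      ext y; simp [hA, not_lt]
    rw [this]
    exact isClosed_le continuous_const hgc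
  have hBc : IsClosed Bᶜ := by
    have : Bᶜ = {y | g y ≤ 1/2} := by
      ext y; simp [hB, not_lt]
    rw [this]
    exact isClosed_le hgc continuous_const
  have h1 : near x ⊆ {p : Ultrafilter X | A ∈ p} := by
    intro p hp
    by_contra hnA
    have : Aᶜ ∈ p := Ultrafilter.compl_mem_iff_notMem.mpr hnA
    have hx' : x ∈ closure Aᶜ := hp _ this
    rw [hAc.closure_eq] at hx'
    have : g x = 0 := by simp [hg, hfx]
    simp only [Set.mem_compl_iff, hA, Set.mem_setOf_eq, not_lt, this] at hx'
    linarith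
  have h2 : nearSet F ⊆ {p : Ultrafilter X | B ∈ p} := by
    intro p hp
    by_contra hnB
    have : Bᶜ ∈ p := Ultrafilter.compl_mem_iff_notMem.mpr hnB
    obtain ⟨y, hy1, hy2⟩ := hp _ this
    rw [hBc.closure_eq] at hy1
    have : g y = 1 := by simp [hg, hfF hy2]
    simp only [Set.mem_compl_iff, hB, Set.mem_setOf_eq, not_lt, this] at hy1
    linarith
  have c1 : closure (near x) ⊆ {p : Ultrafilter X | A ∈ p} :=
    closure_minimal h1 (ultrafilter_isClosed_basic A)
  have c2 : closure (nearSet F) ⊆ {p : Ultrafilter X | B ∈ p} :=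
    closure_minimal h2 (ultrafilter_isClosed_basic B)
  ext p
  simp only [Set.mem_inter_iff, Set.mem_empty_iff_false, iff_false]
  rintro ⟨hp1, hp2⟩
  have hAB : A ∩ B ∈ p := Filter.inter_mem (c1 hp1) (c2 hp2)
  obtain ⟨y, hy1, hy2⟩ := Filter.nonempty_of_mem hAB
  simp only [hA, hB, Set.mem_setOf_eq] at hy1 hy2
  linarith
end

section
/- A topological space (X, τ) is a normal T₁ space (i.e., T₄) if and only if X is T₁ and for every pair of disjoint closed subsets A, B ⊆ X one has cl_{βX_d}(A^*) ∩ cl_{βX_d}(B^*) = ∅, where the closures are taken in the ultrafilter space βX_d. (Theorem 4.4(6)) -/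
lemma nearSet_subset_basic {X : Type*} [TopologicalSpace X] {A U : Set X}
    (hU : IsOpen U) (hAU : A ⊆ U) :
    nearSet A ⊆ {p : Ultrafilter X | closure U ∈ p} := by
  intro p hp
  by_contra hc
  have h1 : (closure U)ᶜ ∈ p := Ultrafilter.compl_mem_iff_notMem.2 hc
  obtain ⟨x, hx1, hx2⟩ := hp _ h1
  have hdis : Disjoint U (closure (closure U)ᶜ) :=
    (disjoint_compl_right.mono_right (Set.compl_subset_compl.2 subset_closure)).closure_right hU
  exact hdis.ne_of_mem (hAU hx2) hx1 rfl

theorem stmt19 {X : Type*} [TopologicalSpace X] :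
    T4Space X ↔ T1Space X ∧
      ∀ A B : Set X, IsClosed A → IsClosed B → Disjoint A B →
        closure (nearSet A) ∩ closure (nearSet B) = ∅ := by
  constructor
  · intro h
    refine ⟨inferInstance, fun A B hA hB hAB => ?_⟩
    obtain ⟨U, hU, hAU, hUc⟩ := normal_exists_closure_subset hA hB.isOpen_compl
      hAB.subset_compl_right
    obtain ⟨V, hV, hBV, hVc⟩ := normal_exists_closure_subset hB
      isClosed_closure.isOpen_compl (by
        intro x hx hxc
        exact hUc hxc hx)
    have hcA : closure (nearSet A) ⊆ {p : Ultrafilter X | closure U ∈ p} :=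
      closure_minimal (nearSet_subset_basic hU hAU) (ultrafilter_isClosed_basic _)
    have hcB : closure (nearSet B) ⊆ {p : Ultrafilter X | closure V ∈ p} :=
      closure_minimal (nearSet_subset_basic hV hBV) (ultrafilter_isClosed_basic _)
    ext p
    simp only [Set.mem_inter_iff, Set.mem_empty_iff_false, iff_false, not_and]
    intro hpA hpB
    have hmem : closure U ∩ closure V ∈ p := p.inter_mem (hcA hpA) (hcB hpB)
    have : (∅ : Set X) ∈ p := by
      refine Filter.mem_of_superset hmem ?_
      intro x ⟨hx1, hx2⟩
      exact absurd hx1 (hVc hx2)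
    exact absurd this p.empty_notMem
  · rintro ⟨h1, h2⟩
    have hn : NormalSpace X := by
      constructor
      intro A B hA hB hAB
      rw [separatedNhds_iff_disjoint]
      by_contra hd
      have hne : Filter.NeBot (nhdsSet A ⊓ nhdsSet B) :=
        Filter.neBot_iff.2 (by rwa [disjoint_iff] at hd)
      set p := Ultrafilter.of (nhdsSet A ⊓ nhdsSet B) with hp_def
      have hpl := Ultrafilter.of_le (nhdsSet A ⊓ nhdsSet B)
      have key : ∀ F : Set X, (p : Filter X) ≤ nhdsSet F → p ∈ nearSet F := by
        intro F hle S hS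
        by_contra hcs
        have hAc : F ⊆ (closure S)ᶜ := by
          rw [Set.not_nonempty_iff_eq_empty] at hcs
          intro x hx hxc
          exact absurd (Set.mem_inter hxc hx) (by rw [hcs]; exact Set.notMem_empty x)
        have hmem : (closure S)ᶜ ∈ nhdsSet F :=
          (isClosed_closure.isOpen_compl.mem_nhdsSet).2 hAc
        have hmem' : (closure S)ᶜ ∈ p := hle hmem
        have : (∅ : Set X) ∈ p := by
          refine Filter.mem_of_superset (p.inter_mem hS hmem') ?_
          intro x ⟨hx1, hx2⟩
          exact absurd (subset_closure hx1) hx2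
        exact absurd this p.empty_notMem
      have hpA : p ∈ nearSet A := key A (hpl.trans inf_le_left)
      have hpB : p ∈ nearSet B := key B (hpl.trans inf_le_right)
      have := h2 A B hA hB hAB
      have hmem : p ∈ closure (nearSet A) ∩ closure (nearSet B) :=
        ⟨subset_closure hpA, subset_closure hpB⟩
      rw [this] at hmem
      exact hmem
    infer_instance
end
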